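/- Let G be a connected finite simple graph and let H be a connected subgraph of G. If H admits a connected and complete k-coloring of its vertices, then G admits a connected and complete k-coloring of its vertices; consequently ψ_c(H) ≤ ψ_c(G). -/

import Mathlib

open SimpleGraph

/-- `c` is a complete vertex `k`-coloring of `G`: it is surjective onto the `k` colors and
every two distinct colors appear on the ends of some edge. -/
def IsCompleteColoring {V : Type*} {k : ℕ} (G : SimpleGraph V) (c : V → Fin k) : Prop :=
  Function.Surjective c ∧
    ∀ i j : Fin k, i ≠ j → ∃ u v : V, G.Adj u v ∧ c u = i ∧ c v = j

/-- `c` is a connected vertex coloring of `G`: every color class induces a connected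
subgraph. -/
def IsConnectedColoring {V : Type*} {k : ℕ} (G : SimpleGraph V) (c : V → Fin k) : Prop :=
  ∀ i : Fin k, (G.induce (c ⁻¹' {i})).Connected

/-- The connected-pseudoachromatic number of `G`. -/
noncomputable def connPseudoachromatic {V : Type*} (G : SimpleGraph V) : ℕ :=
  sSup {k : ℕ | ∃ c : V → Fin k, IsCompleteColoring G c ∧ IsConnectedColoring G c}

lemma induce_singleton_connected' {V : Type*} (G : SimpleGraph V) (v : V) :
    (G.induce ({v} : Set V)).Connected := by
  rw [connected_iff_exists_forall_reachable]
  refine ⟨⟨v, rfl⟩, ?_⟩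
  rintro ⟨w, (hw : w = v)⟩
  subst hw
  exact Reachable.refl _

lemma extend_coloring {V : Type*} [Fintype V] (G : SimpleGraph V) (hG : G.Connected)
    {k : ℕ} (hk : 0 < k) :
    ∀ (n : ℕ) (T : Set V) (c : V → Fin k), Tᶜ.ncard = n →
      (∀ i : Fin k, (c ⁻¹' {i} ∩ T).Nonempty) →
      (∀ i : Fin k, (G.induce (c ⁻¹' {i} ∩ T)).Connected) →
      ∃ c' : V → Fin k, (∀ v ∈ T, c' v = c v) ∧
        ∀ i, (G.induce (c' ⁻¹' {i})).Connected := by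
  classical
  intro n
  induction n with
  | zero =>
    intro T c hcard _ hconn
    have hTc : Tᶜ = ∅ := (Set.ncard_eq_zero (Set.toFinite _)).mp hcard
    have hT : T = Set.univ := Set.compl_empty_iff.mp hTc
    refine ⟨c, fun v _ => rfl, fun i => ?_⟩
    have := hconn i
    rwa [hT, Set.inter_univ] at this
  | succ n ih =>
    intro T c hcard hne hconn
    obtain ⟨a, -, haT⟩ := hne ⟨0, hk⟩
    have hTc : Tᶜ.Nonempty := Set.nonempty_of_ncard_ne_zero (by omega)
    obtain ⟨b, hb⟩ := hTc
    obtain ⟨p⟩ := hG.preconnected a b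
    obtain ⟨d, -, hd1, hd2⟩ := p.exists_boundary_dart T haT hb
    have hadj : G.Adj d.fst d.snd := d.adj
    set u := d.fst
    set v := d.snd
    set c₂ := Function.update c v (c u) with hc₂
    have hc₂v : c₂ v = c u := Function.update_self v (c u) c
    have hc₂x : ∀ x, x ≠ v → c₂ x = c x := fun x hx => Function.update_of_ne hx _ _
    have h1 : (insert v T)ᶜ.ncard = n := by
      have hci : (insert v T)ᶜ = Tᶜ \ {v} := by
        ext x; simp [not_or, and_comm]
      rw [hci, Set.ncard_diff_singleton_of_mem (show v ∈ Tᶜ from hd2), hcard]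
      omega
    have key : ∀ i : Fin k, c₂ ⁻¹' {i} ∩ insert v T =
        if i = c u then (c ⁻¹' {i} ∩ T) ∪ {v} else c ⁻¹' {i} ∩ T := by
      intro i
      ext x
      by_cases hx : x = v
      · subst hx
        simp only [Set.mem_inter_iff, Set.mem_preimage, Set.mem_singleton_iff,
          Set.mem_insert_iff, true_or, and_true, hc₂v]
        split <;> rename_i h
        · simp [h]
        · simp only [Set.mem_inter_iff, Set.mem_preimage, Set.mem_singleton_iff]
          constructor
          · intro hcv; exact absurd hcv.symm h
          · rintro ⟨-, hxT⟩; exact absurd hxT hd2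
      · simp only [Set.mem_inter_iff, Set.mem_preimage, Set.mem_singleton_iff,
          Set.mem_insert_iff, hc₂x x hx]
        split <;>
          simp only [Set.mem_union, Set.mem_inter_iff, Set.mem_preimage,
            Set.mem_singleton_iff, hx, or_false] <;> tauto
    have hne2 : ∀ i : Fin k, (c₂ ⁻¹' {i} ∩ insert v T).Nonempty := by
      intro i
      rw [key i]
      split
      · exact (hne i).mono Set.subset_union_left
      · exact hne i
    have hconn2 : ∀ i : Fin k, (G.induce (c₂ ⁻¹' {i} ∩ insert v T)).Connected := by
      intro i
      rw [key i]
      by_cases h : i = c u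
      · rw [if_pos h]
        exact connected_induce_union (hconn i).preconnected (induce_singleton_connected' G v).preconnected
          ⟨h.symm, hd1⟩ rfl hadj
      · rw [if_neg h]
        exact hconn i
    obtain ⟨c', hagree, hconn'⟩ := ih (insert v T) c₂ h1 hne2 hconn2
    refine ⟨c', fun w hw => ?_, hconn'⟩
    have hwv : w ≠ v := fun hwv => hd2 (hwv ▸ hw)
    rw [hagree w (Set.mem_insert_of_mem _ hw), hc₂x w hwv]

theorem connPseudoachromatic_mono_of_connected_subgraph
    {V : Type*} [Fintype V] (G : SimpleGraph V) (hG : G.Connected)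
    (H : G.Subgraph) (hH : H.Connected) :
    (∀ (k : ℕ) (c : H.verts → Fin k),
      IsCompleteColoring H.coe c ∧ IsConnectedColoring H.coe c →
        ∃ c' : V → Fin k, IsCompleteColoring G c' ∧ IsConnectedColoring G c') ∧
      connPseudoachromatic H.coe ≤ connPseudoachromatic G := by
  classical
  have h1 : ∀ (k : ℕ) (c : H.verts → Fin k),
      IsCompleteColoring H.coe c ∧ IsConnectedColoring H.coe c →
        ∃ c' : V → Fin k, IsCompleteColoring G c' ∧ IsConnectedColoring G c' := by
    rintro k c ⟨⟨hsurj, hcomp⟩, hconnc⟩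
    obtain ⟨y, hy⟩ := hH.nonempty
    rcases Nat.eq_zero_or_pos k with rfl | hk
    · exact (c ⟨y, hy⟩).elim0
    set c₀ : V → Fin k := fun w => if h : w ∈ H.verts then c ⟨w, h⟩ else c ⟨y, hy⟩ with hc₀
    have hag : ∀ (w : V) (h : w ∈ H.verts), c₀ w = c ⟨w, h⟩ := fun w h => dif_pos h
    have hne : ∀ i : Fin k, (c₀ ⁻¹' {i} ∩ H.verts).Nonempty := by
      intro i
      obtain ⟨x, hx⟩ := hsurj i
      exact ⟨x.1, by rw [Set.mem_preimage, Set.mem_singleton_iff, hag x.1 x.2]; exact hx, x.2⟩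
    have hconn : ∀ i : Fin k, (G.induce (c₀ ⁻¹' {i} ∩ H.verts)).Connected := by
      intro i
      have hc := hconnc i
      refine Connected.map ?_ ?_ hc
      · refine ⟨fun x => ⟨x.1.1, ⟨?_, x.1.2⟩⟩, ?_⟩
        · rw [Set.mem_preimage, Set.mem_singleton_iff, hag x.1.1 x.1.2]
          exact x.2
        · rintro a b hab
          exact H.adj_sub hab
      · intro x
        have hx2 := x.2
        rw [Set.mem_inter_iff] at hx2
        refine ⟨⟨⟨x.1, hx2.2⟩, ?_⟩, Subtype.ext rfl⟩
        rw [Set.mem_preimage, Set.mem_singleton_iff, ← hag x.1 hx2.2]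
        exact hx2.1
    obtain ⟨c', hagree, hconn'⟩ := extend_coloring G hG hk H.vertsᶜ.ncard H.verts c₀ rfl hne hconn
    have hagree' : ∀ x : H.verts, c' x.1 = c x := by
      intro x
      rw [hagree x.1 x.2, hag x.1 x.2]
    refine ⟨c', ⟨⟨?_, ?_⟩, hconn'⟩⟩
    · intro i
      obtain ⟨x, hx⟩ := hsurj i
      exact ⟨x.1, (hagree' x).trans hx⟩
    · intro i j hij
      obtain ⟨u, v, huv, hu, hv⟩ := hcomp i j hij
      exact ⟨u.1, v.1, H.adj_sub huv, (hagree' u).trans hu, (hagree' v).trans hv⟩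
  refine ⟨h1, ?_⟩
  set SH := {k : ℕ | ∃ c : H.verts → Fin k,
    IsCompleteColoring H.coe c ∧ IsConnectedColoring H.coe c}
  set SG := {k : ℕ | ∃ c : V → Fin k, IsCompleteColoring G c ∧ IsConnectedColoring G c}
  rcases Set.eq_empty_or_nonempty SH with hSH | hSH
  · unfold connPseudoachromatic
    rw [show {k : ℕ | ∃ c : H.verts → Fin k,
      IsCompleteColoring H.coe c ∧ IsConnectedColoring H.coe c} = SH from rfl, hSH]
    simp [csSup_empty]
  · have hBdd : BddAbove SG := by
      refine ⟨Fintype.card V, fun k hk => ?_⟩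
      obtain ⟨c, ⟨hs, -⟩, -⟩ := hk
      simpa using Fintype.card_le_of_surjective c hs
    exact csSup_le_csSup hBdd hSH (fun k hk => h1 k hk.choose hk.choose_spec)
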